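/- Under the hypotheses of the invariance result, taking D₀ = max_{1≤i≤N} max_{s∈[-τ,0]} ‖v_i(s)‖, every solution of the delayed hierarchical Cucker-Smale system satisfies ‖v_i(t)‖ ≤ D₀ for all i = 1,...,N and all t ≥ 0. -/

import Mathlib

open scoped RealInnerProductSpace

lemma ball_invariant {d : ℕ} {ι : Type*} (s : Finset ι)
    (w : ℝ → EuclideanSpace ℝ (Fin d)) (u : ι → ℝ → EuclideanSpace ℝ (Fin d))
    (a : ι → ℝ → ℝ) (D₀ : ℝ) (hD : 0 ≤ D₀)
    (ha_cont : ∀ j, Continuous (a j)) (ha_nn : ∀ j t, 0 ≤ a j t)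
    (hw_cont : Continuous w)
    (hode : ∀ t > (0:ℝ), HasDerivAt w (∑ j ∈ s, a j t • (u j t - w t)) t)
    (hu : ∀ j ∈ s, ∀ t ≥ (0:ℝ), ‖u j t‖ ≤ D₀) (h0 : ‖w 0‖ ≤ D₀) :
    ∀ t ≥ (0:ℝ), ‖w t‖ ≤ D₀ := by
  set A : ℝ → ℝ := fun t => ∑ j ∈ s, a j t with hA
  have hA_cont : Continuous A := continuous_finset_sum _ fun j _ => ha_cont j
  have hA_nn : ∀ t, 0 ≤ A t := fun t => Finset.sum_nonneg fun j _ => ha_nn j t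
  set F : ℝ → ℝ := fun t => ∫ x in (0:ℝ)..t, A x with hF
  have hF_deriv : ∀ t, HasDerivAt F (A t) t := fun t =>
    (hA_cont.integral_hasStrictDerivAt 0 t).hasDerivAt
  set h : ℝ → ℝ := fun t => ⟪w t, w t⟫ - D₀ ^ 2 with hh
  set φ : ℝ → ℝ := fun t => Real.exp (F t) * h t with hφ
  have hh_cont : Continuous h := by
    exact ((hw_cont.inner hw_cont)).sub continuous_const
  have hφ_cont : Continuous φ := by
    exact ((Real.continuous_exp.comp (continuous_iff_continuousAt.mpr (fun t => (hF_deriv t).continuousAt)))).mul hh_cont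
  -- derivative of φ on (0, ∞) is ≤ 0
  have key : ∀ t > (0:ℝ), ∃ φ', HasDerivAt φ φ' t ∧ φ' ≤ 0 := by
    intro t ht
    have hw' := hode t ht
    have hhd : HasDerivAt h (⟪w t, ∑ j ∈ s, a j t • (u j t - w t)⟫ +
        ⟪∑ j ∈ s, a j t • (u j t - w t), w t⟫) t := by
      exact (HasDerivAt.inner ℝ hw' hw').sub_const _
    have hφd : HasDerivAt φ (Real.exp (F t) * A t * h t +
        Real.exp (F t) * (⟪w t, ∑ j ∈ s, a j t • (u j t - w t)⟫ +
        ⟪∑ j ∈ s, a j t • (u j t - w t), w t⟫)) t := by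
      have he : HasDerivAt (fun t => Real.exp (F t)) (Real.exp (F t) * A t) t :=
        (Real.hasDerivAt_exp (F t)).comp t (hF_deriv t)
      exact he.mul hhd
    refine ⟨_, hφd, ?_⟩
    have hbound : ⟪w t, ∑ j ∈ s, a j t • (u j t - w t)⟫ ≤ A t / 2 * (D₀ ^ 2 - ⟪w t, w t⟫) := by
      rw [inner_sum]
      rw [hA, Finset.sum_div, Finset.sum_mul]
      refine Finset.sum_le_sum fun j hj => ?_
      rw [real_inner_smul_right, inner_sub_right]
      have h1 : ⟪w t, u j t⟫ ≤ ‖w t‖ * D₀ := by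
        calc ⟪w t, u j t⟫ ≤ ‖w t‖ * ‖u j t‖ := real_inner_le_norm _ _
          _ ≤ ‖w t‖ * D₀ := by
              exact mul_le_mul_of_nonneg_left (hu j hj t ht.le) (norm_nonneg _)
      have h2 : ⟪w t, w t⟫ = ‖w t‖ ^ 2 := real_inner_self_eq_norm_sq _
      have := ha_nn j t
      nlinarith [sq_nonneg (‖w t‖ - D₀)]
    have hbound' : ⟪∑ j ∈ s, a j t • (u j t - w t), w t⟫ ≤ A t / 2 * (D₀ ^ 2 - ⟪w t, w t⟫) := by
      rwa [real_inner_comm]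
    have hexp : (0:ℝ) < Real.exp (F t) := Real.exp_pos _
    have hhval : h t = ⟪w t, w t⟫ - D₀ ^ 2 := rfl
    have hs1 : A t * h t + (⟪w t, ∑ j ∈ s, a j t • (u j t - w t)⟫ +
        ⟪∑ j ∈ s, a j t • (u j t - w t), w t⟫) ≤ 0 := by
      rw [hhval]; nlinarith
    have e : Real.exp (F t) * A t * h t +
        Real.exp (F t) * (⟪w t, ∑ j ∈ s, a j t • (u j t - w t)⟫ +
        ⟪∑ j ∈ s, a j t • (u j t - w t), w t⟫) =
        Real.exp (F t) * (A t * h t + (⟪w t, ∑ j ∈ s, a j t • (u j t - w t)⟫ +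
        ⟪∑ j ∈ s, a j t • (u j t - w t), w t⟫)) := by ring
    rw [e]
    exact mul_nonpos_of_nonneg_of_nonpos hexp.le hs1
  -- φ is antitone on [0, ∞)
  intro t ht
  have hφle : φ t ≤ φ 0 := by
    rcases eq_or_lt_of_le ht with h' | h'
    · rw [← h']
    have : AntitoneOn φ (Set.Icc 0 t) := by
      apply antitoneOn_of_deriv_nonpos (convex_Icc 0 t) hφ_cont.continuousOn
      · intro x hx
        rw [interior_Icc] at hx
        obtain ⟨φ', hd, _⟩ := key x hx.1
        exact hd.differentiableAt.differentiableWithinAt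
      · intro x hx
        rw [interior_Icc] at hx
        obtain ⟨φ', hd, hle⟩ := key x hx.1
        rw [hd.deriv]; exact hle
    exact this (Set.left_mem_Icc.2 ht) (Set.mem_Icc.2 ⟨le_refl 0, ht⟩ |>.imp id (fun _ => ht) |> fun _ => ⟨ht, le_refl t⟩) ht
  have hφ0 : φ 0 ≤ 0 := by
    have : h 0 ≤ 0 := by
      have : ⟪w 0, w 0⟫ = ‖w 0‖ ^ 2 := real_inner_self_eq_norm_sq _
      simp only [hh]
      nlinarith [norm_nonneg (w 0)]
    have hexp : (0:ℝ) < Real.exp (F 0) := Real.exp_pos _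
    simp only [hφ]
    nlinarith
  have hht : h t ≤ 0 := by
    have hexp : (0:ℝ) < Real.exp (F t) := Real.exp_pos _
    have : Real.exp (F t) * h t ≤ 0 := le_trans hφle hφ0
    nlinarith
  have : ⟪w t, w t⟫ = ‖w t‖ ^ 2 := real_inner_self_eq_norm_sq _
  simp only [hh] at hht
  nlinarith [norm_nonneg (w t)]

theorem stmt_3 (d N : ℕ) (τ D₀ : ℝ) (hτ : 0 < τ)
    (v : Fin N → ℝ → EuclideanSpace ℝ (Fin d))
    (a : Fin N → Fin N → ℝ → ℝ) (L : Fin N → Finset (Fin N))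
    (ha_cont : ∀ i j, Continuous (a i j)) (ha_nonneg : ∀ i j t, 0 ≤ a i j t)
    (hv_cont : ∀ i, Continuous (v i)) (hv_diff : ∀ i, Differentiable ℝ (v i))
    (hHL : ∀ i, ∀ j ∈ L i, j < i)
    (hode : ∀ i, ∀ t > (0:ℝ),
      HasDerivAt (v i) (∑ j ∈ L i, a i j t • (v j (t - τ) - v i t)) t)
    (hD₀ : IsGreatest {r : ℝ | ∃ i, ∃ s ∈ Set.Icc (-τ) (0:ℝ), r = ‖v i s‖} D₀) :
    ∀ i, ∀ t ≥ (0:ℝ), ‖v i t‖ ≤ D₀ := by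
  have hmem : ∀ (i : Fin N) (s : ℝ), s ∈ Set.Icc (-τ) (0:ℝ) → ‖v i s‖ ≤ D₀ := by
    intro i s hs
    exact hD₀.2 ⟨i, s, hs, rfl⟩
  have claim : ∀ n : ℕ, ∀ i : Fin N, i.val = n → ∀ t ≥ (0:ℝ), ‖v i t‖ ≤ D₀ := by
    intro n
    induction n using Nat.strong_induction_on with
    | _ n IH =>
      intro i hi
      have hD : 0 ≤ D₀ := le_trans (norm_nonneg (v i 0)) (hmem i 0 ⟨by linarith, le_refl 0⟩)
      refine ball_invariant (L i) (v i) (fun j t => v j (t - τ)) (fun j => a i j) D₀ hD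
        (fun j => ha_cont i j) (fun j t => ha_nonneg i j t) (hv_cont i)
        (fun t ht => hode i t ht) ?_ (hmem i 0 ⟨by linarith, le_refl 0⟩)
      intro j hj t ht
      rcases le_or_gt (t - τ) 0 with h' | h'
      · exact hmem j (t - τ) ⟨by linarith, h'⟩
      · exact IH j.val (hi ▸ hHL i j hj) j rfl (t - τ) h'.le
  exact fun i t ht => claim i.val i rfl t ht
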